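/- Let m, n, m', n' be nonzero integers with |m| < |n| and |m'| < |n'|, and let φ : BS(m,n) → BS(m',n') be a line-preserving bijection. Then φ preserves the labels of standard lines: for every g ∈ BS(m,n), the image φ(g⟨a⟩) of the a-line through g is a left coset of the cyclic subgroup generated by the generator a of BS(m',n'), and the image φ(g⟨t⟩) of the t-line through g is a left coset of the cyclic subgroup generated by the generator t of BS(m',n'). -/

import Mathlib

/-- The single defining relator `t a^m t⁻¹ (a^n)⁻¹` of the Baumslag–Solitar group `BS(m,n)`,
as an element of the free group on `Bool`, where `false` stands for the generator `a` and
`true` for the generator `t`. -/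
def bsRel (m n : ℤ) : FreeGroup Bool :=
  FreeGroup.of true * FreeGroup.of false ^ m * (FreeGroup.of true)⁻¹ *
    (FreeGroup.of false ^ n)⁻¹

/-- The Baumslag–Solitar group `BS(m,n) = ⟨a, t ∣ t a^m t⁻¹ = a^n⟩`. -/
abbrev BS (m n : ℤ) : Type := PresentedGroup ({bsRel m n} : Set (FreeGroup Bool))

/-- The generator `a` of `BS(m,n)`. -/
def BS.a (m n : ℤ) : BS m n := PresentedGroup.of false

/-- The generator `t` (stable letter) of `BS(m,n)`. -/
def BS.t (m n : ℤ) : BS m n := PresentedGroup.of true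

open Multiplicative Subgroup

def Am (m : ℤ) : Subgroup (Multiplicative ℤ) := zpowers (ofAdd m)

lemma mem_Am_iff {m : ℤ} {x : Multiplicative ℤ} : x ∈ Am m ↔ m ∣ toAdd x := by
  rw [Am, mem_zpowers_iff]
  constructor
  · rintro ⟨k, hk⟩
    exact ⟨k, by rw [← hk, toAdd_zpow, toAdd_ofAdd, smul_eq_mul, mul_comm]⟩
  · rintro ⟨k, hk⟩
    exact ⟨k, by rw [← ofAdd_toAdd x, hk, ← ofAdd_zsmul, smul_eq_mul, mul_comm]⟩

lemma ofAdd_mul_mem_Am {m c : ℤ} : ofAdd (m * c) ∈ Am m :=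
  mem_Am_iff.mpr ⟨c, by rw [toAdd_ofAdd]⟩

def bsφ (m n : ℤ) (hm : m ≠ 0) (hn : n ≠ 0) : Am m ≃* Am n where
  toFun x := ⟨ofAdd (n * (toAdd (x : Multiplicative ℤ) / m)), ofAdd_mul_mem_Am⟩
  invFun x := ⟨ofAdd (m * (toAdd (x : Multiplicative ℤ) / n)), ofAdd_mul_mem_Am⟩
  left_inv x := by
    obtain ⟨c, hc⟩ := mem_Am_iff.mp x.2
    apply Subtype.ext
    show ofAdd (m * (toAdd (ofAdd (n * (toAdd (x : Multiplicative ℤ) / m))) / n)) = _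
    rw [toAdd_ofAdd, Int.mul_ediv_cancel_left _ hn, hc, Int.mul_ediv_cancel_left _ hm,
      ← hc, ofAdd_toAdd]
  right_inv x := by
    obtain ⟨c, hc⟩ := mem_Am_iff.mp x.2
    apply Subtype.ext
    show ofAdd (n * (toAdd (ofAdd (m * (toAdd (x : Multiplicative ℤ) / n))) / m)) = _
    rw [toAdd_ofAdd, Int.mul_ediv_cancel_left _ hm, hc, Int.mul_ediv_cancel_left _ hn,
      ← hc, ofAdd_toAdd]
  map_mul' x y := by
    obtain ⟨c, hc⟩ := mem_Am_iff.mp x.2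
    obtain ⟨d, hd⟩ := mem_Am_iff.mp y.2
    apply Subtype.ext
    show ofAdd (n * (toAdd ((x : Multiplicative ℤ) * (y : Multiplicative ℤ)) / m)) =
      ofAdd (n * (toAdd (x : Multiplicative ℤ) / m)) * ofAdd (n * (toAdd (y : Multiplicative ℤ) / m))
    rw [toAdd_mul, hc, hd, ← mul_add m c d, Int.mul_ediv_cancel_left _ hm,
      Int.mul_ediv_cancel_left _ hm, Int.mul_ediv_cancel_left _ hm, ← ofAdd_add, ← mul_add]

lemma bsφ_apply (m n : ℤ) (hm : m ≠ 0) (hn : n ≠ 0) (c : ℤ) :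
    (bsφ m n hm hn ⟨ofAdd (m * c), ofAdd_mul_mem_Am⟩ : Multiplicative ℤ) = ofAdd (n * c) := by
  show ofAdd (n * (toAdd (ofAdd (m * c)) / m)) = _
  rw [toAdd_ofAdd, Int.mul_ediv_cancel_left _ hm]

abbrev BSH (m n : ℤ) (hm : m ≠ 0) (hn : n ≠ 0) : Type :=
  HNNExtension (Multiplicative ℤ) (Am m) (Am n) (bsφ m n hm hn)

lemma hnn_rel (m n : ℤ) (hm : m ≠ 0) (hn : n ≠ 0) :
    HNNExtension.t * HNNExtension.of (ofAdd m) * HNNExtension.t⁻¹ =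
      (HNNExtension.of (ofAdd n) : BSH m n hm hn) := by
  have h := HNNExtension.equiv_eq_conj (φ := bsφ m n hm hn) ⟨ofAdd (m * 1), ofAdd_mul_mem_Am⟩
  rw [bsφ_apply] at h
  rw [show ofAdd m = ofAdd (m * 1) from by rw [mul_one],
    show ofAdd n = ofAdd (n * 1) from by rw [mul_one]]
  exact h.symm

lemma ofAdd_one_zpow (k : ℤ) : (ofAdd (1:ℤ)) ^ k = ofAdd k := by
  rw [← ofAdd_zsmul, smul_eq_mul, mul_one]

def toH (m n : ℤ) (hm : m ≠ 0) (hn : n ≠ 0) : BS m n →* BSH m n hm hn :=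
  PresentedGroup.toGroup
    (f := fun b => cond b HNNExtension.t (HNNExtension.of (ofAdd (1:ℤ))))
    (by
      rintro r rfl
      simp only [bsRel, map_mul, map_zpow, map_inv, FreeGroup.lift_apply_of, cond_true, cond_false]
      rw [← map_zpow HNNExtension.of (ofAdd (1:ℤ)) m, ← map_zpow HNNExtension.of (ofAdd (1:ℤ)) n, ofAdd_one_zpow m, ofAdd_one_zpow n, ← hnn_rel m n hm hn]
      group)

@[simp] lemma toH_a (m n : ℤ) (hm : m ≠ 0) (hn : n ≠ 0) :
    toH m n hm hn (BS.a m n) = HNNExtension.of (ofAdd (1:ℤ)) :=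
  PresentedGroup.toGroup.of _

@[simp] lemma toH_t (m n : ℤ) (hm : m ≠ 0) (hn : n ≠ 0) :
    toH m n hm hn (BS.t m n) = HNNExtension.t :=
  PresentedGroup.toGroup.of _

lemma toH_apow (m n : ℤ) (hm : m ≠ 0) (hn : n ≠ 0) (k : ℤ) :
    toH m n hm hn (BS.a m n ^ k) = HNNExtension.of (ofAdd k) := by
  rw [map_zpow, toH_a, ← map_zpow HNNExtension.of (ofAdd (1:ℤ)) k, ofAdd_one_zpow]

lemma apow_inj (m n : ℤ) (hm : m ≠ 0) (hn : n ≠ 0) {k l : ℤ}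
    (h : BS.a m n ^ k = BS.a m n ^ l) : k = l := by
  have h2 := congrArg (toH m n hm hn) h
  rw [toH_apow, toH_apow] at h2
  exact ofAdd.injective (HNNExtension.of_injective (φ := bsφ m n hm hn) h2)

/-! ### Relation and degree -/

lemma bs_relation (m n : ℤ) :
    BS.t m n * BS.a m n ^ m * (BS.t m n)⁻¹ = BS.a m n ^ n := by
  have hmem : bsRel m n ∈ Subgroup.normalClosure ({bsRel m n} : Set (FreeGroup Bool)) :=
    Subgroup.subset_normalClosure (Set.mem_singleton _)
  have h : PresentedGroup.mk {bsRel m n} (FreeGroup.of true * FreeGroup.of false ^ m *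
      (FreeGroup.of true)⁻¹ * (FreeGroup.of false ^ n)⁻¹) = 1 :=
    (QuotientGroup.eq_one_iff _).mpr hmem
  simp only [map_mul, map_zpow, map_inv] at h
  rw [mul_inv_eq_iff_eq_mul, one_mul] at h
  exact h

lemma conj_rel (m n : ℤ) (c : ℤ) :
    BS.t m n * BS.a m n ^ (m * c) * (BS.t m n)⁻¹ = BS.a m n ^ (n * c) := by
  rw [zpow_mul, zpow_mul, ← conj_zpow, bs_relation]

def deg (m n : ℤ) : BS m n →* Multiplicative ℤ :=
  PresentedGroup.toGroup (f := fun b => cond b (Multiplicative.ofAdd (1:ℤ)) 1)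
    (by rintro r rfl; simp [bsRel])

@[simp] lemma deg_a (m n : ℤ) : deg m n (BS.a m n) = 1 := PresentedGroup.toGroup.of _
@[simp] lemma deg_t (m n : ℤ) : deg m n (BS.t m n) = Multiplicative.ofAdd (1:ℤ) :=
  PresentedGroup.toGroup.of _
@[simp] lemma deg_apow (m n : ℤ) (k : ℤ) : deg m n (BS.a m n ^ k) = 1 := by
  rw [map_zpow, deg_a, one_zpow]
@[simp] lemma deg_tpow (m n : ℤ) (i : ℤ) :
    deg m n (BS.t m n ^ i) = Multiplicative.ofAdd i := by
  rw [map_zpow, deg_t, ofAdd_one_zpow]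

lemma apow_eq_tpow (m n : ℤ) (hm : m ≠ 0) (hn : n ≠ 0) {k l : ℤ}
    (h : BS.a m n ^ k = BS.t m n ^ l) : k = 0 ∧ l = 0 := by
  have h2 := congrArg (deg m n) h
  rw [deg_apow, deg_tpow] at h2
  have hl : l = 0 := by
    have := congrArg Multiplicative.toAdd h2
    simpa using this.symm
  refine ⟨?_, hl⟩
  rw [hl, zpow_zero] at h
  exact apow_inj m n hm hn (by rw [h, zpow_zero])

/-! ### Britton's lemma for BS(m,n) -/

lemma chain'_replicate_append {α : Type*} (R : α → α → Prop) (u : α) (hu : R u u)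
    (l : List α) (hl : l.Chain' R) (hhead : ∀ y ∈ l.head?, R u y) :
    ∀ i : ℕ, (List.replicate i u ++ l).Chain' R := by
  intro i
  induction i with
  | zero => simpa
  | succ i ih =>
    rw [List.replicate_succ, List.cons_append, List.Chain', List.isChain_cons]
    refine ⟨?_, ih⟩
    intro y hy
    cases i with
    | zero =>
      simp only [List.replicate_zero, List.nil_append] at hy
      exact hhead y hy
    | succ i =>
      rw [List.replicate_succ, List.cons_append, List.head?_cons] at hy
      cases hy
      exact hu

lemma uneg : ((-1 : ℤˣ) : ℤ) = -1 := rfl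
lemma upos : ((1 : ℤˣ) : ℤ) = 1 := rfl

lemma britton_neg (m n : ℤ) (hm : m ≠ 0) (hn : n ≠ 0) (s : ℕ) (k l : ℤ)
    (h : (BS.t m n) ^ (-(s+1:ℤ)) * BS.a m n ^ k * (BS.t m n) ^ (s+1:ℤ) = BS.a m n ^ l) :
    n ∣ k := by
  by_contra hnd
  set φ := bsφ m n hm hn
  set T := HNNExtension.t (G := Multiplicative ℤ) (A := Am m) (B := Am n) (φ := φ)
  set O := HNNExtension.of (G := Multiplicative ℤ) (A := Am m) (B := Am n) (φ := φ)
  have h' : T ^ (-(s+1:ℤ)) * O (Multiplicative.ofAdd k) * T ^ (s+1:ℤ)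
      = O (Multiplicative.ofAdd l) := by
    have h2 := congrArg (toH m n hm hn) h
    rw [map_mul, map_mul, toH_apow, toH_apow, map_zpow, map_zpow, toH_t] at h2
    exact h2
  let w : HNNExtension.NormalWord.ReducedWord (Multiplicative ℤ) (Am m) (Am n) :=
    { head := 1
      toList := List.replicate s ((-1 : ℤˣ), (1 : Multiplicative ℤ)) ++
        (((-1 : ℤˣ), Multiplicative.ofAdd k) ::
          (List.replicate s ((1 : ℤˣ), (1 : Multiplicative ℤ)) ++
            [((1 : ℤˣ), Multiplicative.ofAdd (-l))]))
      chain := by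
        apply chain'_replicate_append _ _ (fun _ => rfl)
        · rw [List.Chain', List.isChain_cons]
          constructor
          · intro y hy hmem
            exfalso
            rw [HNNExtension.toSubgroup_neg_one] at hmem
            exact hnd (by simpa using mem_Am_iff.mp hmem)
          · apply chain'_replicate_append _ _ (fun _ => rfl)
            · exact List.isChain_singleton _
            · intro y hy
              simp only [List.head?_cons, Option.mem_some_iff] at hy
              subst hy
              intro _; rfl
        · intro y hy
          simp only [List.head?_cons, Option.mem_some_iff] at hy
          subst hy
          intro _; rfl }
  have hone : w.prod φ = 1 := by
    show HNNExtension.of w.head * _ = 1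
    simp only [w, List.map_append, List.map_cons, List.map_replicate, List.prod_append,
      List.prod_cons, List.prod_replicate, map_one, one_mul, uneg, upos, zpow_neg_one, zpow_one]
    rw [show (O (Multiplicative.ofAdd k)) =
        T ^ (s+1:ℤ) * O (Multiplicative.ofAdd l) * T ^ (-(s+1:ℤ)) by
      rw [← h']; group]
    have hll : O (Multiplicative.ofAdd l) * O (Multiplicative.ofAdd (-l)) = 1 := by
      rw [← map_mul, ← ofAdd_add, add_neg_cancel, ofAdd_zero, map_one]
    calc (T⁻¹)^s * (T⁻¹ * (T ^ (s+1:ℤ) * O (Multiplicative.ofAdd l) * T ^ (-(s+1:ℤ))) *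
          (T ^ s * (T * O (Multiplicative.ofAdd (-l)))))
        = (T⁻¹)^s * T⁻¹ * T ^ (s+1:ℤ) * O (Multiplicative.ofAdd l) *
            (T ^ (-(s+1:ℤ)) * T ^ s * T) * O (Multiplicative.ofAdd (-l)) := by group
      _ = O (Multiplicative.ofAdd l) * O (Multiplicative.ofAdd (-l)) := by
            rw [show (T⁻¹)^s * T⁻¹ * T ^ (s+1:ℤ) = 1 by group,
                show T ^ (-(s+1:ℤ)) * T ^ s * T = 1 by group]
            group
      _ = 1 := hll
  have hnil := HNNExtension.ReducedWord.toList_eq_nil_of_mem_of_range φ w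
    (by rw [hone]; exact Subgroup.one_mem _)
  simp [w] at hnil

lemma britton_pos (m n : ℤ) (hm : m ≠ 0) (hn : n ≠ 0) (s : ℕ) (k l : ℤ)
    (h : (BS.t m n) ^ (s+1:ℤ) * BS.a m n ^ k * (BS.t m n) ^ (-(s+1:ℤ)) = BS.a m n ^ l) :
    m ∣ k := by
  by_contra hnd
  set φ := bsφ m n hm hn
  set T := HNNExtension.t (G := Multiplicative ℤ) (A := Am m) (B := Am n) (φ := φ)
  set O := HNNExtension.of (G := Multiplicative ℤ) (A := Am m) (B := Am n) (φ := φ)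
  have h' : T ^ (s+1:ℤ) * O (Multiplicative.ofAdd k) * T ^ (-(s+1:ℤ))
      = O (Multiplicative.ofAdd l) := by
    have h2 := congrArg (toH m n hm hn) h
    rw [map_mul, map_mul, toH_apow, toH_apow, map_zpow, map_zpow, toH_t] at h2
    exact h2
  let w : HNNExtension.NormalWord.ReducedWord (Multiplicative ℤ) (Am m) (Am n) :=
    { head := 1
      toList := List.replicate s ((1 : ℤˣ), (1 : Multiplicative ℤ)) ++
        (((1 : ℤˣ), Multiplicative.ofAdd k) ::
          (List.replicate s ((-1 : ℤˣ), (1 : Multiplicative ℤ)) ++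
            [((-1 : ℤˣ), Multiplicative.ofAdd (-l))]))
      chain := by
        apply chain'_replicate_append _ _ (fun _ => rfl)
        · rw [List.Chain', List.isChain_cons]
          constructor
          · intro y hy hmem
            exfalso
            rw [HNNExtension.toSubgroup_one] at hmem
            exact hnd (by simpa using mem_Am_iff.mp hmem)
          · apply chain'_replicate_append _ _ (fun _ => rfl)
            · exact List.isChain_singleton _
            · intro y hy
              simp only [List.head?_cons, Option.mem_some_iff] at hy
              subst hy
              intro _; rfl
        · intro y hy
          simp only [List.head?_cons, Option.mem_some_iff] at hy
          subst hy
          intro _; rfl }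
  have hone : w.prod φ = 1 := by
    show HNNExtension.of w.head * _ = 1
    simp only [w, List.map_append, List.map_cons, List.map_replicate, List.prod_append,
      List.prod_cons, List.prod_replicate, map_one, one_mul, uneg, upos, zpow_neg_one, zpow_one]
    rw [show (O (Multiplicative.ofAdd k)) =
        T ^ (-(s+1:ℤ)) * O (Multiplicative.ofAdd l) * T ^ (s+1:ℤ) by
      rw [← h']; group]
    have hll : O (Multiplicative.ofAdd l) * O (Multiplicative.ofAdd (-l)) = 1 := by
      rw [← map_mul, ← ofAdd_add, add_neg_cancel, ofAdd_zero, map_one]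
    calc T^s * (T * (T ^ (-(s+1:ℤ)) * O (Multiplicative.ofAdd l) * T ^ (s+1:ℤ)) *
          ((T⁻¹) ^ s * (T⁻¹ * O (Multiplicative.ofAdd (-l)))))
        = T^s * T * T ^ (-(s+1:ℤ)) * O (Multiplicative.ofAdd l) *
            (T ^ (s+1:ℤ) * (T⁻¹) ^ s * T⁻¹) * O (Multiplicative.ofAdd (-l)) := by group
      _ = O (Multiplicative.ofAdd l) * O (Multiplicative.ofAdd (-l)) := by
            rw [show T^s * T * T ^ (-(s+1:ℤ)) = 1 by group,
                show T ^ (s+1:ℤ) * (T⁻¹) ^ s * T⁻¹ = 1 by group]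
            group
      _ = 1 := hll
  have hnil := HNNExtension.ReducedWord.toList_eq_nil_of_mem_of_range φ w
    (by rw [hone]; exact Subgroup.one_mem _)
  simp [w] at hnil

/-- Britton's lemma, `t⁻ⁱ aᵏ tⁱ ∈ ⟨a⟩` with `i > 0` forces `n ∣ k`. -/
lemma britton_neg' (m n : ℤ) (hm : m ≠ 0) (hn : n ≠ 0) (i : ℤ) (hi : 0 < i) (k l : ℤ)
    (h : (BS.t m n) ^ (-i) * BS.a m n ^ k * (BS.t m n) ^ i = BS.a m n ^ l) :
    n ∣ k := by
  obtain ⟨s, rfl⟩ : ∃ s : ℕ, i = (s : ℤ) + 1 := ⟨(i - 1).toNat, by omega⟩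
  exact britton_neg m n hm hn s k l h

lemma britton_pos' (m n : ℤ) (hm : m ≠ 0) (hn : n ≠ 0) (i : ℤ) (hi : 0 < i) (k l : ℤ)
    (h : (BS.t m n) ^ i * BS.a m n ^ k * (BS.t m n) ^ (-i) = BS.a m n ^ l) :
    m ∣ k := by
  obtain ⟨s, rfl⟩ : ∃ s : ℕ, i = (s : ℤ) + 1 := ⟨(i - 1).toNat, by omega⟩
  exact britton_pos m n hm hn s k l h

/-! ### Commutation identities -/

/-- `a^(nˢ v) tˢ = tˢ a^(mˢ v)`. -/
lemma awt (m n : ℤ) (s : ℕ) (v : ℤ) :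
    BS.a m n ^ (n ^ s * v) * (BS.t m n) ^ (s : ℤ) =
      (BS.t m n) ^ (s : ℤ) * BS.a m n ^ (m ^ s * v) := by
  induction s generalizing v with
  | zero => simp
  | succ s ih =>
    have h1 : (n : ℤ) ^ (s + 1) * v = n ^ s * (n * v) := by ring
    have h2 : ((s + 1 : ℕ) : ℤ) = (s : ℤ) + 1 := by push_cast; ring
    rw [h1, h2, zpow_add_one, ← mul_assoc, ih (n * v)]
    have h3 : BS.a m n ^ (m ^ s * (n * v)) * BS.t m n =
        BS.t m n * BS.a m n ^ (m ^ (s+1) * v) := by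
      have hc := conj_rel m n (m ^ s * v)
      rw [mul_inv_eq_iff_eq_mul] at hc
      have h4 : n * (m ^ s * v) = m ^ s * (n * v) := by ring
      have h5 : m * (m ^ s * v) = m ^ (s+1) * v := by ring
      rw [h4, h5] at hc
      exact hc.symm
    rw [mul_assoc, h3, ← mul_assoc, ← zpow_add_one]

/-- For `m² = 1` : `tʳ aᵏ t⁻ʳ = a^((mn)ʳ k)`. -/
lemma conj_pow_m1 (m n : ℤ) (h1 : m * m = 1) (r : ℕ) (k : ℤ) :
    (BS.t m n) ^ (r : ℤ) * BS.a m n ^ k * (BS.t m n) ^ (-(r : ℤ)) =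
      BS.a m n ^ ((m * n) ^ r * k) := by
  induction r generalizing k with
  | zero => simp
  | succ r ih =>
    have h2 : ((r + 1 : ℕ) : ℤ) = (r : ℤ) + 1 := by push_cast; ring
    rw [h2]
    have e1 : BS.t m n ^ ((r:ℤ) + 1) = BS.t m n ^ (r:ℤ) * BS.t m n := by
      rw [zpow_add_one]
    have e2 : BS.t m n ^ (-((r:ℤ) + 1)) = (BS.t m n)⁻¹ * BS.t m n ^ (-(r:ℤ)) := by
      rw [show -((r:ℤ)+1) = -1 + -(r:ℤ) by ring, zpow_add, zpow_neg_one]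
    rw [e1, e2]
    have hc := conj_rel m n (m * k)
    rw [show m * (m * k) = k by rw [← mul_assoc, h1, one_mul]] at hc
    calc BS.t m n ^ (r:ℤ) * BS.t m n * BS.a m n ^ k * ((BS.t m n)⁻¹ * BS.t m n ^ (-(r:ℤ)))
        = BS.t m n ^ (r:ℤ) * (BS.t m n * BS.a m n ^ k * (BS.t m n)⁻¹) * BS.t m n ^ (-(r:ℤ)) := by
          group
      _ = BS.t m n ^ (r:ℤ) * BS.a m n ^ (n * (m * k)) * BS.t m n ^ (-(r:ℤ)) := by rw [hc]
      _ = BS.a m n ^ ((m * n) ^ r * (n * (m * k))) := ih _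
      _ = BS.a m n ^ ((m * n) ^ (r+1) * k) := by ring_nf

/-- When `|m| = 1`, every element of `BS(m,n)` has the form `tⁱ a^c tʲ` with `j ≥ 0`. -/
lemma repr_m1 (m n : ℤ) (h1 : m * m = 1) (g : BS m n) :
    ∃ (i c : ℤ) (j : ℕ), g = (BS.t m n) ^ i * BS.a m n ^ c * (BS.t m n) ^ (j : ℤ) := by
  have hmem : g ∈ Subgroup.closure (Set.range (PresentedGroup.of :
      Bool → BS m n)) := by
    rw [PresentedGroup.closure_range_of]; trivial
  induction hmem using Subgroup.closure_induction_right with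
  | one => exact ⟨0, 0, 0, by simp⟩
  | mul_right x hx y hy ih =>
    obtain ⟨i, c, j, rfl⟩ := ih
    obtain ⟨b, rfl⟩ := hy
    cases b with
    | true =>
      refine ⟨i, c, j + 1, ?_⟩
      show _ * BS.t m n = _
      rw [mul_assoc, ← zpow_add_one]
      push_cast
      ring_nf
    | false =>
      refine ⟨i, c + (m*n)^j, j, ?_⟩
      show _ * BS.a m n = _
      have hj := conj_pow_m1 m n h1 j 1
      rw [mul_one] at hj
      have key : (BS.t m n) ^ (j:ℤ) * BS.a m n ^ (1:ℤ) =
          BS.a m n ^ ((m*n)^j) * (BS.t m n) ^ (j:ℤ) := by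
        rw [← hj]; group
      calc BS.t m n ^ i * BS.a m n ^ c * BS.t m n ^ (j:ℤ) * BS.a m n
          = BS.t m n ^ i * BS.a m n ^ c * (BS.t m n ^ (j:ℤ) * BS.a m n ^ (1:ℤ)) := by
            rw [zpow_one, mul_assoc]
        _ = BS.t m n ^ i * BS.a m n ^ c * (BS.a m n ^ ((m*n)^j) * BS.t m n ^ (j:ℤ)) := by
            rw [key]
        _ = BS.t m n ^ i * BS.a m n ^ (c + (m*n)^j) * BS.t m n ^ (j:ℤ) := by
            rw [zpow_add]; group
  | mul_inv_cancel x hx y hy ih =>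
    obtain ⟨i, c, j, rfl⟩ := ih
    obtain ⟨b, rfl⟩ := hy
    cases b with
    | true =>
      cases j with
      | zero =>
        refine ⟨i - 1, (m*n)^1 * c, 0, ?_⟩
        show _ * (BS.t m n)⁻¹ = _
        have hj1 := conj_pow_m1 m n h1 1 c
        have e : BS.t m n ^ i * BS.a m n ^ c * BS.t m n ^ ((0:ℕ):ℤ) * (BS.t m n)⁻¹ =
            BS.t m n ^ (i-1) * (BS.t m n ^ ((1:ℕ):ℤ) * BS.a m n ^ c * BS.t m n ^ (-((1:ℕ):ℤ))) := by
          push_cast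
          group
        rw [e, hj1]
        push_cast
        group
      | succ j' =>
        refine ⟨i, c, j', ?_⟩
        show _ * (BS.t m n)⁻¹ = _
        push_cast
        group
    | false =>
      refine ⟨i, c - (m*n)^j, j, ?_⟩
      show _ * (BS.a m n)⁻¹ = _
      have hj := conj_pow_m1 m n h1 j (-1)
      have key : (BS.t m n) ^ (j:ℤ) * BS.a m n ^ (-1:ℤ) =
          BS.a m n ^ (-((m*n)^j)) * (BS.t m n) ^ (j:ℤ) := by
        rw [show ((m*n)^j * (-1:ℤ)) = -((m*n)^j) from by ring] at hj
        rw [← hj]; group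
      calc BS.t m n ^ i * BS.a m n ^ c * BS.t m n ^ (j:ℤ) * (BS.a m n)⁻¹
          = BS.t m n ^ i * BS.a m n ^ c * (BS.t m n ^ (j:ℤ) * BS.a m n ^ (-1:ℤ)) := by
            rw [zpow_neg_one, mul_assoc]
        _ = BS.t m n ^ i * BS.a m n ^ c * (BS.a m n ^ (-((m*n)^j)) * BS.t m n ^ (j:ℤ)) := by
            rw [key]
        _ = BS.t m n ^ i * BS.a m n ^ (c - (m*n)^j) * BS.t m n ^ (j:ℤ) := by
            rw [sub_eq_add_neg, zpow_add]; group

/-- The `a`-line through `g` in `BS(m,n)`: the left coset `g⟨a⟩`. -/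
def aLine (m n : ℤ) (g : BS m n) : Set (BS m n) := {x | ∃ i : ℤ, x = g * BS.a m n ^ i}

/-- The `t`-line through `g` in `BS(m,n)`: the left coset `g⟨t⟩`. -/
def tLine (m n : ℤ) (g : BS m n) : Set (BS m n) := {x | ∃ i : ℤ, x = g * BS.t m n ^ i}

/-- A standard line in `BS(m,n)` is an `a`-line or a `t`-line. -/
def IsStandardLine (m n : ℤ) (ℓ : Set (BS m n)) : Prop :=
  (∃ g, ℓ = aLine m n g) ∨ (∃ g, ℓ = tLine m n g)

/-- A map `BS(m,n) → BS(m',n')` is line-preserving if the image of every standard line is a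
standard line. -/
def LinePreserving {m n m' n' : ℤ} (φ : BS m n → BS m' n') : Prop :=
  ∀ ℓ : Set (BS m n), IsStandardLine m n ℓ → IsStandardLine m' n' (φ '' ℓ)

/-! ### Basic line lemmas -/

lemma mem_aLine_self (m n : ℤ) (g : BS m n) : g ∈ aLine m n g := ⟨0, by simp⟩
lemma mem_tLine_self (m n : ℤ) (g : BS m n) : g ∈ tLine m n g := ⟨0, by simp⟩

lemma aLine_eq_of_mem {m n : ℤ} {g x : BS m n} (h : x ∈ aLine m n g) :
    aLine m n x = aLine m n g := by
  obtain ⟨i, rfl⟩ := h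
  ext y
  constructor
  · rintro ⟨j, rfl⟩
    exact ⟨i + j, by rw [zpow_add, ← mul_assoc]⟩
  · rintro ⟨j, rfl⟩
    exact ⟨j - i, by rw [mul_assoc, ← zpow_add]; congr 1; ring⟩

lemma tLine_eq_of_mem {m n : ℤ} {g x : BS m n} (h : x ∈ tLine m n g) :
    tLine m n x = tLine m n g := by
  obtain ⟨i, rfl⟩ := h
  ext y
  constructor
  · rintro ⟨j, rfl⟩
    exact ⟨i + j, by rw [zpow_add, ← mul_assoc]⟩
  · rintro ⟨j, rfl⟩
    exact ⟨j - i, by rw [mul_assoc, ← zpow_add]; congr 1; ring⟩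

lemma aLine_ne_tLine (m n : ℤ) (hm : m ≠ 0) (hn : n ≠ 0) (g h : BS m n) :
    aLine m n g ≠ tLine m n h := by
  intro he
  have h1 : g ∈ tLine m n h := he ▸ mem_aLine_self m n g
  have h2 : g * BS.t m n ∈ aLine m n g := by
    rw [he, ← tLine_eq_of_mem h1]
    exact ⟨1, by rw [zpow_one]⟩
  obtain ⟨i, hi⟩ := h2
  have : BS.a m n ^ i = BS.t m n ^ (1:ℤ) := by
    rw [zpow_one]
    exact mul_left_cancel hi.symm
  exact absurd (apow_eq_tpow m n hm hn this).2 one_ne_zero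

lemma standard_through {m n : ℤ} {ℓ : Set (BS m n)} (hℓ : IsStandardLine m n ℓ)
    {x : BS m n} (hx : x ∈ ℓ) : ℓ = aLine m n x ∨ ℓ = tLine m n x := by
  rcases hℓ with ⟨g, rfl⟩ | ⟨g, rfl⟩
  · exact Or.inl (aLine_eq_of_mem hx).symm
  · exact Or.inr (tLine_eq_of_mem hx).symm

/-! ### Good/Bad dichotomy -/

def GoodAt {m n m' n' : ℤ} (φ : BS m n → BS m' n') (g : BS m n) : Prop :=
  φ '' aLine m n g = aLine m' n' (φ g) ∧ φ '' tLine m n g = tLine m' n' (φ g)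

def BadAt {m n m' n' : ℤ} (φ : BS m n → BS m' n') (g : BS m n) : Prop :=
  φ '' aLine m n g = tLine m' n' (φ g) ∧ φ '' tLine m n g = aLine m' n' (φ g)

lemma dichotomy {m n m' n' : ℤ} (hm : m ≠ 0) (hn : n ≠ 0) (hm' : m' ≠ 0) (hn' : n' ≠ 0)
    (φ : BS m n → BS m' n') (hinj : Function.Injective φ) (hlp : LinePreserving φ)
    (g : BS m n) : GoodAt φ g ∨ BadAt φ g := by
  have h1 := hlp _ (Or.inl ⟨g, rfl⟩)
  have h2 := hlp _ (Or.inr ⟨g, rfl⟩)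
  have hga : φ g ∈ φ '' aLine m n g := ⟨g, mem_aLine_self m n g, rfl⟩
  have hgt : φ g ∈ φ '' tLine m n g := ⟨g, mem_tLine_self m n g, rfl⟩
  have himg : Function.Injective (Set.image φ) := Set.image_injective.mpr hinj
  rcases standard_through h1 hga with ha | ha <;>
    rcases standard_through h2 hgt with ht | ht
  · exact absurd (himg (ha.trans ht.symm)) (aLine_ne_tLine m n hm hn g g)
  · exact Or.inl ⟨ha, ht⟩
  · exact Or.inr ⟨ha, ht⟩
  · exact absurd (himg (ha.trans ht.symm)) (aLine_ne_tLine m n hm hn g g)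

lemma not_good_and_bad {m n m' n' : ℤ} (hm' : m' ≠ 0) (hn' : n' ≠ 0)
    (φ : BS m n → BS m' n') (g : BS m n) (hG : GoodAt φ g) (hB : BadAt φ g) : False :=
  aLine_ne_tLine m' n' hm' hn' (φ g) (φ g) (hG.1.symm.trans hB.1)

lemma good_prop {m n m' n' : ℤ} (hm : m ≠ 0) (hn : n ≠ 0) (hm' : m' ≠ 0) (hn' : n' ≠ 0)
    (φ : BS m n → BS m' n') (hinj : Function.Injective φ) (hlp : LinePreserving φ)
    {g x : BS m n} (hx : x ∈ aLine m n g ∨ x ∈ tLine m n g) (hG : GoodAt φ g) :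
    GoodAt φ x := by
  rcases dichotomy hm hn hm' hn' φ hinj hlp x with h | h
  · exact h
  · exfalso
    rcases hx with hx | hx
    · have e1 : aLine m n x = aLine m n g := aLine_eq_of_mem hx
      have e2 : φ x ∈ aLine m' n' (φ g) := hG.1 ▸ ⟨x, hx, rfl⟩
      have e3 : aLine m' n' (φ x) = aLine m' n' (φ g) := aLine_eq_of_mem e2
      have : aLine m' n' (φ x) = tLine m' n' (φ x) := by
        rw [e3, ← hG.1, ← e1, h.1]
      exact aLine_ne_tLine m' n' hm' hn' _ _ this
    · have e1 : tLine m n x = tLine m n g := tLine_eq_of_mem hx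
      have e2 : φ x ∈ tLine m' n' (φ g) := hG.2 ▸ ⟨x, hx, rfl⟩
      have e3 : tLine m' n' (φ x) = tLine m' n' (φ g) := tLine_eq_of_mem e2
      have : aLine m' n' (φ x) = tLine m' n' (φ x) := by
        rw [e3, ← hG.2, ← e1, h.2]
      exact aLine_ne_tLine m' n' hm' hn' _ _ this

lemma bad_prop {m n m' n' : ℤ} (hm : m ≠ 0) (hn : n ≠ 0) (hm' : m' ≠ 0) (hn' : n' ≠ 0)
    (φ : BS m n → BS m' n') (hinj : Function.Injective φ) (hlp : LinePreserving φ)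
    {g x : BS m n} (hx : x ∈ aLine m n g ∨ x ∈ tLine m n g) (hB : BadAt φ g) :
    BadAt φ x := by
  rcases dichotomy hm hn hm' hn' φ hinj hlp x with h | h
  · exfalso
    have hg : g ∈ aLine m n x ∨ g ∈ tLine m n x := by
      rcases hx with hx | hx
      · exact Or.inl ((aLine_eq_of_mem hx).symm ▸ mem_aLine_self m n g)
      · exact Or.inr ((tLine_eq_of_mem hx).symm ▸ mem_tLine_self m n g)
    exact not_good_and_bad hm' hn' φ g
      (good_prop hm hn hm' hn' φ hinj hlp hg h) hB
  · exact h

lemma good_or_bad_all {m n m' n' : ℤ} (hm : m ≠ 0) (hn : n ≠ 0) (hm' : m' ≠ 0) (hn' : n' ≠ 0)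
    (φ : BS m n → BS m' n') (hinj : Function.Injective φ) (hlp : LinePreserving φ) :
    (∀ g, GoodAt φ g) ∨ (∀ g, BadAt φ g) := by
  have key : ∀ (P : BS m n → Prop),
      (∀ g x, (x ∈ aLine m n g ∨ x ∈ tLine m n g) → P g → P x) → P 1 → ∀ g, P g := by
    intro P hprop h1 g
    have hmem : g ∈ Subgroup.closure (Set.range (PresentedGroup.of : Bool → BS m n)) := by
      rw [PresentedGroup.closure_range_of]; trivial
    induction hmem using Subgroup.closure_induction_right with
    | one => exact h1
    | mul_right x hx y hy ih =>
      obtain ⟨b, rfl⟩ := hy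
      cases b with
      | true => exact hprop x _ (Or.inr ⟨1, by rw [zpow_one]; rfl⟩) ih
      | false => exact hprop x _ (Or.inl ⟨1, by rw [zpow_one]; rfl⟩) ih
    | mul_inv_cancel x hx y hy ih =>
      obtain ⟨b, rfl⟩ := hy
      cases b with
      | true => exact hprop x _ (Or.inr ⟨-1, by rw [zpow_neg_one]; rfl⟩) ih
      | false => exact hprop x _ (Or.inl ⟨-1, by rw [zpow_neg_one]; rfl⟩) ih
  rcases dichotomy hm hn hm' hn' φ hinj hlp 1 with h1 | h1
  · exact Or.inl (key _ (fun g x hx hG => good_prop hm hn hm' hn' φ hinj hlp hx hG) h1)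
  · exact Or.inr (key _ (fun g x hx hB => bad_prop hm hn hm' hn' φ hinj hlp hx hB) h1)

/-! ### Source-side facts -/

lemma two_le_abs_n {m n : ℤ} (hm : m ≠ 0) (hmn : |m| < |n|) : 2 ≤ |n| := by
  have := Int.one_le_abs hm
  linarith

lemma n_not_unit {n : ℤ} (h2n : 2 ≤ |n|) {c : ℤ} (h : 1 = n * c) : False := by
  have hdvd : n ∣ 1 := ⟨c, h⟩
  rcases Int.isUnit_iff.mp (isUnit_of_dvd_one hdvd) with rfl | rfl <;> simp at h2n

/-- No `t`-line meets both `aLine t` and `aLine (a*t)`. -/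
lemma source_nocommon (m n : ℤ) (hm : m ≠ 0) (hn : n ≠ 0) (h2n : 2 ≤ |n|) (z : BS m n)
    (h1 : (tLine m n z ∩ aLine m n (BS.t m n)).Nonempty)
    (h2 : (tLine m n z ∩ aLine m n (BS.a m n * BS.t m n)).Nonempty) : False := by
  obtain ⟨p, ⟨i, hp⟩, ⟨u, hpu⟩⟩ := h1
  obtain ⟨q, ⟨i', hq⟩, ⟨v, hqv⟩⟩ := h2
  -- z * t^i = t * a^u,  z * t^i' = a * t * a^v
  have hz1 : z = BS.t m n * BS.a m n ^ u * (BS.t m n) ^ (-i) := by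
    rw [← hpu, hp]; group
  have hz2 : z = BS.a m n * BS.t m n * BS.a m n ^ v * (BS.t m n) ^ (-i') := by
    rw [← hqv, hq]; group
  have hii : i = i' := by
    have hd := congrArg (deg m n) (hz1.symm.trans hz2)
    simp only [map_mul, deg_t, deg_a, deg_apow, deg_tpow, one_mul, mul_one] at hd
    have := congrArg Multiplicative.toAdd hd
    simp only [toAdd_mul, toAdd_ofAdd] at this
    omega
  subst hii
  have hkey : BS.t m n * BS.a m n ^ (u - v) * (BS.t m n)⁻¹ = BS.a m n ^ (1:ℤ) := by
    have he : BS.t m n * BS.a m n ^ u = BS.a m n * BS.t m n * BS.a m n ^ v := by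
      have := hz1.symm.trans hz2
      exact mul_right_cancel this
    rw [zpow_one]
    calc BS.t m n * BS.a m n ^ (u - v) * (BS.t m n)⁻¹
        = BS.t m n * BS.a m n ^ u * (BS.a m n ^ v)⁻¹ * (BS.t m n)⁻¹ := by
          rw [sub_eq_add_neg, zpow_add, zpow_neg]; group
      _ = BS.a m n * BS.t m n * BS.a m n ^ v * (BS.a m n ^ v)⁻¹ * (BS.t m n)⁻¹ := by rw [he]
      _ = BS.a m n := by group
  have hdvd : m ∣ (u - v) := by
    apply britton_pos' m n hm hn 1 one_pos (u - v) 1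
    rw [zpow_one, zpow_neg, zpow_one]
    exact hkey
  obtain ⟨c, hc⟩ := hdvd
  rw [hc] at hkey
  have := conj_rel m n c
  rw [hkey] at this
  exact n_not_unit h2n (apow_inj m n hm hn this)

/-- `aLine t ≠ aLine (a*t)`. -/
lemma source_distinct (m n : ℤ) (hm : m ≠ 0) (hn : n ≠ 0) (h2n : 2 ≤ |n|) :
    aLine m n (BS.t m n) ≠ aLine m n (BS.a m n * BS.t m n) := by
  intro he
  have : BS.a m n * BS.t m n ∈ aLine m n (BS.t m n) := he ▸ mem_aLine_self m n _
  obtain ⟨i, hi⟩ := this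
  have hkey : (BS.t m n) ^ (-(1:ℤ)) * BS.a m n ^ (1:ℤ) * (BS.t m n) ^ (1:ℤ) =
      BS.a m n ^ i := by
    rw [zpow_one, zpow_one, zpow_neg_one]
    calc (BS.t m n)⁻¹ * BS.a m n * BS.t m n
        = (BS.t m n)⁻¹ * (BS.a m n * BS.t m n) := by group
      _ = (BS.t m n)⁻¹ * (BS.t m n * BS.a m n ^ i) := by rw [hi]
      _ = BS.a m n ^ i := by group
  have hdvd := britton_neg' m n hm hn 1 one_pos 1 i hkey
  rcases Int.isUnit_iff.mp (isUnit_of_dvd_one hdvd) with rfl | rfl <;> simp at h2n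

/-- Building a second common transversal from a shift. -/
lemma trans_build (m n : ℤ) (hm : m ≠ 0) (hn : n ≠ 0) (x y : BS m n) (s : ℤ) (hs : 0 < s)
    (hy : y = x * BS.t m n ^ s) :
    ∃ z', z' ∈ aLine m n x ∧ z' * BS.t m n ^ s ∈ aLine m n y ∧
      tLine m n z' ≠ tLine m n x := by
  refine ⟨x * BS.a m n ^ ((n ^ s.toNat : ℤ)), ⟨n ^ s.toNat, rfl⟩, ?_, ?_⟩
  · have hawt := awt m n s.toNat 1
    rw [mul_one, mul_one, Int.toNat_of_nonneg hs.le] at hawt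
    exact ⟨m ^ s.toNat, by rw [hy, mul_assoc, hawt, ← mul_assoc]⟩
  · intro he
    have : x * BS.a m n ^ ((n ^ s.toNat : ℤ)) ∈ tLine m n x :=
      he ▸ mem_tLine_self m n _
    obtain ⟨j, hj⟩ := this
    have : BS.a m n ^ ((n ^ s.toNat : ℤ)) = BS.t m n ^ j := mul_left_cancel hj
    have := (apow_eq_tpow m n hm hn this).1
    exact pow_ne_zero s.toNat hn this

/-- From one common transversal of two distinct `a`-lines, produce a second one. -/
lemma source_two (m n : ℤ) (hm : m ≠ 0) (hn : n ≠ 0) {g1 g2 z : BS m n}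
    (hne : aLine m n g1 ≠ aLine m n g2)
    (h1 : (tLine m n z ∩ aLine m n g1).Nonempty)
    (h2 : (tLine m n z ∩ aLine m n g2).Nonempty) :
    ∃ z', tLine m n z' ≠ tLine m n z ∧
      (tLine m n z' ∩ aLine m n g1).Nonempty ∧
      (tLine m n z' ∩ aLine m n g2).Nonempty := by
  obtain ⟨x, hxz, hx1⟩ := h1
  obtain ⟨y, hyz, hy2⟩ := h2
  have htx : tLine m n x = tLine m n z := tLine_eq_of_mem hxz
  have hty : tLine m n y = tLine m n z := tLine_eq_of_mem hyz
  have hax : aLine m n x = aLine m n g1 := aLine_eq_of_mem hx1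
  have hay : aLine m n y = aLine m n g2 := aLine_eq_of_mem hy2
  obtain ⟨i, rfl⟩ := hxz
  obtain ⟨i', rfl⟩ := hyz
  have hxy : z * BS.t m n ^ i' = (z * BS.t m n ^ i) * BS.t m n ^ (i' - i) := by
    rw [mul_assoc, ← zpow_add]
    congr 2
    ring
  have hs : i' - i ≠ 0 := by
    intro h0
    rw [h0, zpow_zero, mul_one] at hxy
    rw [hxy] at hay
    exact hne (hax.symm.trans hay)
  rcases lt_or_gt_of_ne hs with hneg | hpos
  · -- i' - i < 0 : build from y
    have hx' : z * BS.t m n ^ i = (z * BS.t m n ^ i') * BS.t m n ^ (i - i') := by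
      rw [mul_assoc, ← zpow_add]
      congr 2
      ring
    obtain ⟨z', hz'y, hz's, hz'ne⟩ :=
      trans_build m n hm hn (z * BS.t m n ^ i') (z * BS.t m n ^ i) (i - i')
        (by omega) hx'
    refine ⟨z', fun hh => hz'ne (hh.trans hty.symm), ?_, ?_⟩
    · exact ⟨z' * BS.t m n ^ (i - i'), ⟨i - i', rfl⟩, hax ▸ hz's⟩
    · exact ⟨z', mem_tLine_self m n z', hay ▸ hz'y⟩
  · -- i' - i > 0 : build from x
    obtain ⟨z', hz'x, hz's, hz'ne⟩ :=
      trans_build m n hm hn (z * BS.t m n ^ i) (z * BS.t m n ^ i') (i' - i) hpos hxy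
    refine ⟨z', fun hh => hz'ne (hh.trans htx.symm), ?_, ?_⟩
    · exact ⟨z', mem_tLine_self m n z', hax ▸ hz'x⟩
    · exact ⟨z' * BS.t m n ^ (i' - i), ⟨i' - i, rfl⟩, hay ▸ hz's⟩

/-! ### Target-side facts -/

/-- If `|m|, |n| ≥ 2`, the only `a`-line meeting both `tLine 1` and `tLine a` is `aLine 1`. -/
lemma target_unique (m n : ℤ) (hm : m ≠ 0) (hn : n ≠ 0) (h2m : 2 ≤ |m|) (h2n : 2 ≤ |n|)
    (x : BS m n)
    (h1 : (aLine m n x ∩ tLine m n 1).Nonempty)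
    (h2 : (aLine m n x ∩ tLine m n (BS.a m n)).Nonempty) :
    aLine m n x = aLine m n 1 := by
  obtain ⟨p, hp1, ⟨i, hpi⟩⟩ := h1
  obtain ⟨q, hq1, ⟨i', hqi⟩⟩ := h2
  rw [one_mul] at hpi
  have hax : aLine m n p = aLine m n x := aLine_eq_of_mem hp1
  have hq' : q ∈ aLine m n p := hax ▸ hq1
  obtain ⟨w, hw⟩ := hq'
  -- a * t^i' = t^i * a^w
  have heq : BS.a m n * BS.t m n ^ i' = BS.t m n ^ i * BS.a m n ^ w := by
    rw [← hqi, hw, hpi]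
  have hii : i = i' := by
    have hd := congrArg (deg m n) heq
    simp only [map_mul, deg_t, deg_a, deg_apow, deg_tpow, one_mul, mul_one] at hd
    have := congrArg Multiplicative.toAdd hd
    simp only [toAdd_mul, toAdd_ofAdd] at this
    omega
  subst hii
  rcases lt_trichotomy i 0 with hneg | rfl | hpos
  · exfalso
    have hkey : BS.t m n ^ (-i) * BS.a m n ^ (1:ℤ) * BS.t m n ^ (-(-i)) = BS.a m n ^ w := by
      rw [neg_neg, zpow_one]
      calc BS.t m n ^ (-i) * BS.a m n * BS.t m n ^ i
          = BS.t m n ^ (-i) * (BS.a m n * BS.t m n ^ i) := by group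
        _ = BS.t m n ^ (-i) * (BS.t m n ^ i * BS.a m n ^ w) := by rw [heq]
        _ = BS.a m n ^ w := by group
    have hdvd := britton_pos' m n hm hn (-i) (by omega) 1 w hkey
    rcases Int.isUnit_iff.mp (isUnit_of_dvd_one hdvd) with rfl | rfl <;> simp at h2m
  · have hp : p = 1 := by rw [hpi, zpow_zero]
    rw [← hax, hp]
  · exfalso
    have hkey : BS.t m n ^ (-i) * BS.a m n ^ (1:ℤ) * BS.t m n ^ i = BS.a m n ^ w := by
      rw [zpow_one]
      calc BS.t m n ^ (-i) * BS.a m n * BS.t m n ^ i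
          = BS.t m n ^ (-i) * (BS.a m n * BS.t m n ^ i) := by group
        _ = BS.t m n ^ (-i) * (BS.t m n ^ i * BS.a m n ^ w) := by rw [heq]
        _ = BS.a m n ^ w := by group
    have hdvd := britton_neg' m n hm hn i hpos 1 w hkey
    rcases Int.isUnit_iff.mp (isUnit_of_dvd_one hdvd) with rfl | rfl <;> simp at h2n

/-! ### No label-swapping bijection exists -/

lemma no_swap (m n m' n' : ℤ) (hm : m ≠ 0) (hn : n ≠ 0) (hm' : m' ≠ 0) (hn' : n' ≠ 0)
    (hmn : |m| < |n|) (hmn' : |m'| < |n'|)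
    (φ : BS m n → BS m' n') (hbij : Function.Bijective φ)
    (hB : ∀ g, BadAt φ g) : False := by
  have hinj := hbij.1
  have h2n := two_le_abs_n hm hmn
  have h2n' := two_le_abs_n hm' hmn'
  by_cases hm1 : m' * m' = 1
  · -- |m'| = 1 : every element of the target is t^i a^c t^j, so the two target
    -- t-lines have a common a-transversal; pull it back.
    obtain ⟨i, c, j, hw⟩ := repr_m1 m' n' hm1
      ((φ (BS.t m n))⁻¹ * φ (BS.a m n * BS.t m n))
    set x0 := φ (BS.t m n) * BS.t m' n' ^ i with hx0
    obtain ⟨x, hx⟩ := hbij.2 x0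
    have himg : φ '' tLine m n x = aLine m' n' x0 := by rw [(hB x).2, hx]
    have hP : φ '' aLine m n (BS.t m n) = tLine m' n' (φ (BS.t m n)) := (hB _).1
    have hQ : φ '' aLine m n (BS.a m n * BS.t m n) =
        tLine m' n' (φ (BS.a m n * BS.t m n)) := (hB _).1
    have hp2 : x0 * BS.a m' n' ^ c =
        φ (BS.a m n * BS.t m n) * BS.t m' n' ^ (-(j:ℤ)) := by
      have he : φ (BS.a m n * BS.t m n) = φ (BS.t m n) *
          (BS.t m' n' ^ i * BS.a m' n' ^ c * BS.t m' n' ^ (j:ℤ)) := by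
        rw [← hw]; group
      rw [he, hx0]; group
    have hcom1 : (tLine m n x ∩ aLine m n (BS.t m n)).Nonempty := by
      have h1 : x0 ∈ φ '' tLine m n x := himg ▸ mem_aLine_self m' n' x0
      have h2 : x0 ∈ φ '' aLine m n (BS.t m n) := hP ▸ ⟨i, rfl⟩
      obtain ⟨u, hu, hux⟩ := h1
      obtain ⟨v, hv, hvx⟩ := h2
      exact ⟨u, hu, (hinj (hux.trans hvx.symm)) ▸ hv⟩
    have hcom2 : (tLine m n x ∩ aLine m n (BS.a m n * BS.t m n)).Nonempty := by
      have h1 : x0 * BS.a m' n' ^ c ∈ φ '' tLine m n x := himg ▸ ⟨c, rfl⟩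
      have h2 : x0 * BS.a m' n' ^ c ∈ φ '' aLine m n (BS.a m n * BS.t m n) := by
        rw [hQ, hp2]
        exact ⟨-(j:ℤ), rfl⟩
      obtain ⟨u, hu, hux⟩ := h1
      obtain ⟨v, hv, hvx⟩ := h2
      exact ⟨u, hu, (hinj (hux.trans hvx.symm)) ▸ hv⟩
    exact source_nocommon m n hm hn h2n x hcom1 hcom2
  · -- |m'| ≥ 2
    have h2m' : 2 ≤ |m'| := by
      by_contra hlt
      push_neg at hlt
      have h1 := Int.one_le_abs hm'
      have habs : |m'| = 1 := le_antisymm (by linarith) h1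
      rcases (abs_eq (by norm_num : (0:ℤ) ≤ 1)).mp habs with rfl | rfl <;> simp at hm1
    obtain ⟨y1, hy1⟩ := hbij.2 (1 : BS m' n')
    obtain ⟨y2, hy2⟩ := hbij.2 (BS.a m' n')
    have hI1 : φ '' aLine m n y1 = tLine m' n' 1 := by rw [(hB y1).1, hy1]
    have hI2 : φ '' aLine m n y2 = tLine m' n' (BS.a m' n') := by rw [(hB y2).1, hy2]
    have hne : aLine m n y1 ≠ aLine m n y2 := by
      intro he
      have ht12 : tLine m' n' 1 = tLine m' n' (BS.a m' n') := by rw [← hI1, he, hI2]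
      have : BS.a m' n' ∈ tLine m' n' 1 := ht12 ▸ mem_tLine_self m' n' _
      obtain ⟨k, hk⟩ := this
      rw [one_mul] at hk
      have : BS.a m' n' ^ (1:ℤ) = BS.t m' n' ^ k := by rw [zpow_one]; exact hk
      exact absurd (apow_eq_tpow m' n' hm' hn' this).1 one_ne_zero
    have himgT : φ '' tLine m n y1 = aLine m' n' 1 := by rw [(hB y1).2, hy1]
    have hc1 : (tLine m n y1 ∩ aLine m n y1).Nonempty :=
      ⟨y1, mem_tLine_self m n y1, mem_aLine_self m n y1⟩
    have hc2 : (tLine m n y1 ∩ aLine m n y2).Nonempty := by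
      have h1 : BS.a m' n' ∈ φ '' tLine m n y1 :=
        himgT ▸ ⟨1, by rw [zpow_one, one_mul]⟩
      obtain ⟨u, hu, hux⟩ := h1
      exact ⟨u, hu, (hinj (hux.trans hy2.symm)) ▸ mem_aLine_self m n y2⟩
    obtain ⟨z', hz'ne, hz'1, hz'2⟩ := source_two m n hm hn hne hc1 hc2
    have himgZ : φ '' tLine m n z' = aLine m' n' (φ z') := (hB z').2
    have hm1' : (aLine m' n' (φ z') ∩ tLine m' n' 1).Nonempty := by
      obtain ⟨p, hp1, hp2⟩ := hz'1
      exact ⟨φ p, himgZ ▸ ⟨p, hp1, rfl⟩, hI1 ▸ ⟨p, hp2, rfl⟩⟩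
    have hm2' : (aLine m' n' (φ z') ∩ tLine m' n' (BS.a m' n')).Nonempty := by
      obtain ⟨p, hp1, hp2⟩ := hz'2
      exact ⟨φ p, himgZ ▸ ⟨p, hp1, rfl⟩, hI2 ▸ ⟨p, hp2, rfl⟩⟩
    have huniq := target_unique m' n' hm' hn' h2m' h2n' (φ z') hm1' hm2'
    have hsame : φ '' tLine m n z' = φ '' tLine m n y1 := by
      rw [himgZ, huniq, himgT]
    exact hz'ne (Set.image_injective.mpr hinj hsame)

/-- A line-preserving bijection `φ : BS(m,n) → BS(m',n')` (with
`|m| < |n|`, `|m'| < |n'|`, all nonzero) preserves the labels of standard lines: the image of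
every `a`-line is an `a`-line and the image of every `t`-line is a `t`-line. -/
theorem linePreserving_preserves_labels (m n m' n' : ℤ)
    (hm : m ≠ 0) (hn : n ≠ 0) (hm' : m' ≠ 0) (hn' : n' ≠ 0)
    (hmn : |m| < |n|) (hmn' : |m'| < |n'|)
    (φ : BS m n → BS m' n') (hbij : Function.Bijective φ) (hlp : LinePreserving φ) :
    ∀ g : BS m n,
      (∃ h : BS m' n', φ '' aLine m n g = aLine m' n' h) ∧
      (∃ h : BS m' n', φ '' tLine m n g = tLine m' n' h) := by
  intro g
  rcases good_or_bad_all hm hn hm' hn' φ hbij.1 hlp with hG | hB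
  · exact ⟨⟨φ g, (hG g).1⟩, ⟨φ g, (hG g).2⟩⟩
  · exact (no_swap m n m' n' hm hn hm' hn' hmn hmn' φ hbij hB).elim
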